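/- Let G₀, G₁, G_s ⊆ ℝⁿ be cones with G₀ and G_s convex, satisfying G₀ ∩ G₁ ⊆ G₀ ∩ G_s ⊆ conic.hull(G₀ ∩ G₁) and G₀ ∩ G_s ∩ H⁰ ⊆ G₁, where H⁰ = {x : hᵀx = 0} for some h ∈ ℝⁿ. Then G₀ ∩ G₁ ∩ H⁺ ⊆ G₀ ∩ G_s ∩ H⁺ ⊆ conic.hull(G₀ ∩ G₁ ∩ H⁺), where H⁺ = {x : hᵀx ≥ 0}. -/

import Mathlib

open Matrix

/-- The conic hull: the set of finite nonnegative combinations of elements of `T`. -/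
def conicHull {n : ℕ} (T : Set (Fin n → ℝ)) : Set (Fin n → ℝ) :=
  {x | ∃ (k : ℕ) (c : Fin k → ℝ) (v : Fin k → (Fin n → ℝ)),
    (∀ i, 0 ≤ c i) ∧ (∀ i, v i ∈ T) ∧ x = ∑ i, c i • v i}

theorem stmt_10 (n : ℕ) (G0 G1 Gs : Set (Fin n → ℝ)) (h : Fin n → ℝ)
    (hG0cone : ∀ c : ℝ, 0 ≤ c → ∀ x ∈ G0, c • x ∈ G0)
    (hG1cone : ∀ c : ℝ, 0 ≤ c → ∀ x ∈ G1, c • x ∈ G1)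
    (hGscone : ∀ c : ℝ, 0 ≤ c → ∀ x ∈ Gs, c • x ∈ Gs)
    (hG0conv : Convex ℝ G0) (hGsconv : Convex ℝ Gs)
    (hsub1 : G0 ∩ G1 ⊆ G0 ∩ Gs)
    (hsub2 : G0 ∩ Gs ⊆ conicHull (G0 ∩ G1))
    (hH0 : G0 ∩ Gs ∩ {x | h ⬝ᵥ x = 0} ⊆ G1) :
    G0 ∩ G1 ∩ {x | 0 ≤ h ⬝ᵥ x} ⊆ G0 ∩ Gs ∩ {x | 0 ≤ h ⬝ᵥ x} ∧
    G0 ∩ Gs ∩ {x | 0 ≤ h ⬝ᵥ x} ⊆ conicHull (G0 ∩ G1 ∩ {x | 0 ≤ h ⬝ᵥ x}) := by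
  have hadd : ∀ (S : Set (Fin n → ℝ)), (∀ c : ℝ, 0 ≤ c → ∀ x ∈ S, c • x ∈ S) →
      Convex ℝ S → ∀ a b : Fin n → ℝ, a ∈ S → b ∈ S → a + b ∈ S := by
    intro S hcone hconv a b ha hb
    have := hconv ha hb (by norm_num : (0:ℝ) ≤ 1/2) (by norm_num : (0:ℝ) ≤ 1/2) (by norm_num)
    have h2 := hcone 2 (by norm_num) _ this
    convert h2 using 1
    module
  constructor
  · intro x hx
    exact ⟨hsub1 ⟨hx.1.1, hx.1.2⟩, hx.2⟩
  · intro x hx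
    obtain ⟨⟨hxG0, hxGs⟩, hxH⟩ := hx
    have hxH' : (0:ℝ) ≤ h ⬝ᵥ x := hxH
    rcases eq_or_lt_of_le hxH' with heq | hpos
    · have hxG1 : x ∈ G1 := hH0 ⟨⟨hxG0, hxGs⟩, heq.symm⟩
      exact ⟨1, fun _ => 1, fun _ => x, fun _ => zero_le_one,
        fun _ => ⟨⟨hxG0, hxG1⟩, hxH⟩, by simp⟩
    · obtain ⟨k, c, v, hc, hv, hxeq⟩ := hsub2 ⟨hxG0, hxGs⟩
      set t : Fin k → ℝ := fun i => max 0 (-(h ⬝ᵥ v i)) / (h ⬝ᵥ x) with ht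
      have htnn : ∀ i, 0 ≤ t i := fun i => div_nonneg (le_max_left _ _) hxH
      set u : Fin k → (Fin n → ℝ) := fun i => v i + t i • x with hu
      have hdot : ∀ i, h ⬝ᵥ u i = h ⬝ᵥ v i + max 0 (-(h ⬝ᵥ v i)) := by
        intro i
        have hne : h ⬝ᵥ x ≠ 0 := ne_of_gt hpos
        simp only [hu, dotProduct_add, dotProduct_smul, smul_eq_mul, ht]
        field_simp
      have hdotnn : ∀ i, 0 ≤ h ⬝ᵥ u i := by
        intro i
        rw [hdot i]
        rcases le_or_gt 0 (h ⬝ᵥ v i) with hle | hlt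
        · have : max 0 (-(h ⬝ᵥ v i)) = 0 := max_eq_left (by linarith)
          linarith
        · have : max 0 (-(h ⬝ᵥ v i)) = -(h ⬝ᵥ v i) := max_eq_right (by linarith)
          linarith
      have huG0 : ∀ i, u i ∈ G0 := fun i =>
        hadd G0 hG0cone hG0conv _ _ ((hv i).1) (hG0cone _ (htnn i) _ hxG0)
      have huGs : ∀ i, u i ∈ Gs := fun i =>
        hadd Gs hGscone hGsconv _ _ ((hsub1 (hv i)).2) (hGscone _ (htnn i) _ hxGs)
      have huG1 : ∀ i, u i ∈ G1 := by
        intro i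
        rcases le_or_gt 0 (h ⬝ᵥ v i) with hle | hlt
        · have hti : t i = 0 := by
            show (0 ⊔ -(h ⬝ᵥ v i)) / (h ⬝ᵥ x) = 0
            rw [max_eq_left (by linarith : -(h ⬝ᵥ v i) ≤ 0)]
            simp
          have : u i = v i := by rw [hu]; simp [hti]
          rw [this]; exact (hv i).2
        · have : h ⬝ᵥ u i = 0 := by
            rw [hdot i, max_eq_right (by linarith)]; ring
          exact hH0 ⟨⟨huG0 i, huGs i⟩, this⟩
      set T : ℝ := ∑ i, c i * t i with hT
      have hTnn : 0 ≤ T := Finset.sum_nonneg fun i _ => mul_nonneg (hc i) (htnn i)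
      have hTpos : 0 < 1 + T := by linarith
      have hsum : ∑ i, c i • u i = (1 + T) • x := by
        simp only [hu, smul_add, Finset.sum_add_distrib, ← hxeq, smul_smul]
        rw [← Finset.sum_smul, ← hT, add_smul, one_smul]
      refine ⟨k, fun i => c i / (1 + T), u, fun i => div_nonneg (hc i) hTpos.le,
        fun i => ⟨⟨huG0 i, huG1 i⟩, hdotnn i⟩, ?_⟩
      have : ∑ i, (c i / (1 + T)) • u i = (1 / (1 + T)) • ∑ i, c i • u i := by
        rw [Finset.smul_sum]
        congr 1; funext i
        rw [smul_smul]
        congr 1; field_simp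
      rw [this, hsum, smul_smul]
      field_simp
      rw [one_smul]
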